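/- Let biG = (𝒩, ℰ, ℰ′) be a bilevel graph on 𝒩 = {1,…,N} with N ≥ 2, let A_1, …, A_N be maximal monotone operators on a real Hilbert space H with zer(A_1 + ⋯ + A_N) ≠ ∅, let σ > 0 and θ_k ∈ [ε, 2 − ε] for some 0 < ε < 1, and let (x^k), (a^k), (w^k) be generated by the graph-based Douglas–Rachford iteration. Then, as k → ∞, Var(x^k) = o(k^{−1}) and ‖Σ_{i=1}^N a_i^k‖² = o(k^{−1}); in particular Σ_{i=1}^N a_i^k converges strongly to 0. -/

import Mathlib

open scoped InnerProductSpace Topology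
open Filter

noncomputable section

/-- The simple (undirected) graph induced by a set of directed edges on `Fin N`. -/
def graphOf {N : ℕ} (E : Finset (Fin N × Fin N)) : SimpleGraph (Fin N) where
  Adj i j := i ≠ j ∧ ((i, j) ∈ E ∨ (j, i) ∈ E)
  symm := ⟨fun i j h => ⟨h.1.symm, h.2.symm⟩⟩
  loopless := ⟨fun i h => h.1 rfl⟩

/-- Degree of node `i` in the undirected graph induced by `E`: number of adjacent nodes. -/
def degE {N : ℕ} (E : Finset (Fin N × Fin N)) (i : Fin N) : ℕ :=
  (Finset.univ.filter (fun j => j ≠ i ∧ ((i, j) ∈ E ∨ (j, i) ∈ E))).card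

/-- The graph Laplacian of the graph induced by `E`. -/
def lapE {N : ℕ} (E : Finset (Fin N × Fin N)) : Matrix (Fin N) (Fin N) ℝ :=
  fun i j =>
    if i = j then (degE E i : ℝ)
    else if (i, j) ∈ E ∨ (j, i) ∈ E then -1 else 0

/-- The skew-symmetric matrix `Σ` built from the Laplacian of the base graph. -/
def sigmaE {N : ℕ} (E' : Finset (Fin N × Fin N)) : Matrix (Fin N) (Fin N) ℝ :=
  fun i j => if i < j then -(lapE E' i j) else if j < i then lapE E' i j else 0

/-- The matrix `P^{ij}`. -/
def pijM (N : ℕ) (i j : Fin N) : Matrix (Fin N) (Fin N) ℝ :=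
  fun h k =>
    if h = i ∧ k = i then 1
    else if h = j ∧ k = j then 1
    else if h = j ∧ k = i then -2 else 0

/-- The matrix `P = ∑_{(i,j) ∈ ℰ∖ℰ′} P^{ij}`. -/
def pE {N : ℕ} (E E' : Finset (Fin N × Fin N)) : Matrix (Fin N) (Fin N) ℝ :=
  ∑ e ∈ E \ E', pijM N e.1 e.2

/-- The block operator `Q ⊗ I : H^M → H^N` induced by a matrix `Q ∈ ℝ^{N×M}`. -/
def matVecH {H : Type*} [NormedAddCommGroup H] [InnerProductSpace ℝ H] {N M : ℕ}
    (Q : Matrix (Fin N) (Fin M) ℝ) (x : Fin M → H) : Fin N → H :=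
  fun h => ∑ k, Q h k • x k

/-- `(E, E')` forms a bilevel graph: the state graph `(𝒩, E)` is connected with a topological
ordering, and the base graph `(𝒩, E')` is a connected subgraph. -/
structure IsBilevel {N : ℕ} (E E' : Finset (Fin N × Fin N)) : Prop where
  base_subset : E' ⊆ E
  topo : ∀ e ∈ E, e.1 < e.2
  state_conn : (graphOf E).Connected
  base_conn : (graphOf E').Connected

/-- `Z` gives an onto decomposition of the Laplacian of the base graph `E'`:
`L = Z Zᵀ` and `ker Zᵀ = span{(1,…,1)}`. -/
def ZOnto {N : ℕ} (E' : Finset (Fin N × Fin N)) (Z : Matrix (Fin N) (Fin (N - 1)) ℝ) : Prop :=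
  Z * Z.transpose = lapE E' ∧
  ∀ v : Fin N → ℝ, Z.transpose.mulVec v = 0 ↔ ∃ c : ℝ, v = fun _ => c

/-- The graph-based Douglas–Rachford iteration: `a_i^{k+1} ∈ A_i x_i^{k+1}`,
`(L⊗I)x^{k+1} + ((Σ+P)⊗I)x^{k+1} + σ a^{k+1} = (Z⊗I)w^k` and
`w^{k+1} = w^k − θ_k (Zᵀ⊗I)x^{k+1}`. -/
structure IsGDR {H : Type*} [NormedAddCommGroup H] [InnerProductSpace ℝ H] {N : ℕ}
    (E E' : Finset (Fin N × Fin N)) (Z : Matrix (Fin N) (Fin (N - 1)) ℝ)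
    (A : Fin N → H → Set H) (σ : ℝ) (θ : ℕ → ℝ)
    (x : ℕ → Fin N → H) (a : ℕ → Fin N → H) (w : ℕ → Fin (N - 1) → H) : Prop where
  mem : ∀ k i, a (k + 1) i ∈ A i (x (k + 1) i)
  res : ∀ k, matVecH (lapE E' + sigmaE E' + pE E E') (x (k + 1)) + σ • a (k + 1)
          = matVecH Z (w k)
  upd : ∀ k, w (k + 1) = w k - θ k • matVecH Z.transpose (x (k + 1))

/-- A set-valued operator on a real inner product space is monotone. -/
def IsMonotoneOp {K : Type*} [NormedAddCommGroup K] [InnerProductSpace ℝ K]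
    (A : K → Set K) : Prop :=
  ∀ x y u v : K, u ∈ A x → v ∈ A y → 0 ≤ ⟪u - v, x - y⟫_ℝ

/-- A set-valued operator is maximal monotone. -/
def IsMaxMonotone {K : Type*} [NormedAddCommGroup K] [InnerProductSpace ℝ K]
    (A : K → Set K) : Prop :=
  IsMonotoneOp A ∧ ∀ x u : K, (∀ y v : K, v ∈ A y → 0 ≤ ⟪u - v, x - y⟫_ℝ) → u ∈ A x

/-- `zer (A_1 + ⋯ + A_N) ≠ ∅`. -/
def SumZerNonempty {H : Type*} [NormedAddCommGroup H] [InnerProductSpace ℝ H] {N : ℕ}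
    (A : Fin N → H → Set H) : Prop :=
  ∃ (xs : H) (b : Fin N → H), (∀ i, b i ∈ A i xs) ∧ ∑ i, b i = 0

/-- Weak convergence of a sequence in an inner product space. -/
def WeakLim {K : Type*} [NormedAddCommGroup K] [InnerProductSpace ℝ K]
    (u : ℕ → K) (l : K) : Prop :=
  ∀ h : K, Tendsto (fun k => ⟪u k, h⟫_ℝ) atTop (𝓝 ⟪l, h⟫_ℝ)

/-- The state variance `Var(x) = (1/N) ∑_i ‖x_i − x̄‖²`. -/
def stateVar {H : Type*} [NormedAddCommGroup H] [InnerProductSpace ℝ H] {N : ℕ}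
    (x : Fin N → H) : ℝ :=
  (N : ℝ)⁻¹ * ∑ i, ‖x i - (N : ℝ)⁻¹ • ∑ j, x j‖ ^ 2

/-- In-degree `d_i⁺ = #{h : (h,i) ∈ E}` of node `i`. -/
def inDeg {N : ℕ} (E : Finset (Fin N × Fin N)) (i : Fin N) : ℕ :=
  (Finset.univ.filter (fun h => (h, i) ∈ E)).card

/-- Out-degree `d_i⁻ = #{h : (i,h) ∈ E}` of node `i`. -/
def outDeg {N : ℕ} (E : Finset (Fin N × Fin N)) (i : Fin N) : ℕ :=
  (Finset.univ.filter (fun h => (i, h) ∈ E)).card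

/-- The unbalance `U_G = sqrt((1/N) ∑_i (d_i⁻ − d_i⁺)²)` of the state graph. -/
def unbalance {N : ℕ} (E : Finset (Fin N × Fin N)) : ℝ :=
  Real.sqrt ((N : ℝ)⁻¹ * ∑ i, ((outDeg E i : ℝ) - (inDeg E i : ℝ)) ^ 2)

end


namespace GDR
variable {H : Type*} [NormedAddCommGroup H] [InnerProductSpace ℝ H]

lemma matVecH_add {n m : ℕ} (Q R : Matrix (Fin n) (Fin m) ℝ) (u : Fin m → H) :
    matVecH (Q + R) u = matVecH Q u + matVecH R u := by
  funext h
  simp [matVecH, Matrix.add_apply, add_smul, Finset.sum_add_distrib]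

lemma matVecH_matsub {n m : ℕ} (Q R : Matrix (Fin n) (Fin m) ℝ) (u : Fin m → H) :
    matVecH (Q - R) u = matVecH Q u - matVecH R u := by
  funext h
  simp [matVecH, Matrix.sub_apply, sub_smul, Finset.sum_sub_distrib]

lemma matVecH_sub {n m : ℕ} (Q : Matrix (Fin n) (Fin m) ℝ) (u v : Fin m → H) :
    matVecH Q (u - v) = matVecH Q u - matVecH Q v := by
  funext h
  simp [matVecH, smul_sub, Finset.sum_sub_distrib]

lemma matVecH_one {n : ℕ} (u : Fin n → H) : matVecH 1 u = u := by
  funext h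
  simp [matVecH, Matrix.one_apply, ite_smul]

lemma matVecH_mul {n m p : ℕ} (Q : Matrix (Fin n) (Fin m) ℝ) (R : Matrix (Fin m) (Fin p) ℝ)
    (u : Fin p → H) : matVecH (Q * R) u = matVecH Q (matVecH R u) := by
  funext h
  simp only [matVecH, Matrix.mul_apply, Finset.sum_smul, Finset.smul_sum, smul_smul]
  exact Finset.sum_comm

lemma sum_inner_matVecH {n m : ℕ} (Q : Matrix (Fin n) (Fin m) ℝ) (v : Fin m → H)
    (u : Fin n → H) :
    ∑ i, ⟪matVecH Q v i, u i⟫_ℝ = ∑ k, ⟪v k, matVecH Q.transpose u k⟫_ℝ := by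
  simp only [matVecH, sum_inner, inner_sum, real_inner_smul_left, real_inner_smul_right,
    Matrix.transpose_apply]
  rw [Finset.sum_comm]


variable {H : Type*} [NormedAddCommGroup H] [InnerProductSpace ℝ H]

lemma matVecH_neg {n m : ℕ} (Q : Matrix (Fin n) (Fin m) ℝ) (u : Fin m → H) :
    matVecH (-Q) u = -matVecH Q u := by
  funext h
  simp [matVecH, Matrix.neg_apply, Finset.sum_neg_distrib]

lemma matVecH_finsum {n m : ℕ} {α : Type*} (s : Finset α) (Q : α → Matrix (Fin n) (Fin m) ℝ)
    (u : Fin m → H) : matVecH (∑ e ∈ s, Q e) u = ∑ e ∈ s, matVecH (Q e) u := by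
  funext h
  simp [matVecH, Matrix.sum_apply, Finset.sum_smul]
  exact Finset.sum_comm

-- copies from aux1 assumed available later; here restate for compile test
lemma matVecH_mul' {n m p : ℕ} (Q : Matrix (Fin n) (Fin m) ℝ) (R : Matrix (Fin m) (Fin p) ℝ)
    (u : Fin p → H) : matVecH (Q * R) u = matVecH Q (matVecH R u) := by
  funext h
  simp only [matVecH, Matrix.mul_apply, Finset.sum_smul, Finset.smul_sum, smul_smul]
  exact Finset.sum_comm

lemma sum_inner_matVecH' {n m : ℕ} (Q : Matrix (Fin n) (Fin m) ℝ) (v : Fin m → H)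
    (u : Fin n → H) :
    ∑ i, ⟪matVecH Q v i, u i⟫_ℝ = ∑ k, ⟪v k, matVecH Q.transpose u k⟫_ℝ := by
  simp only [matVecH, sum_inner, inner_sum, real_inner_smul_left, real_inner_smul_right,
    Matrix.transpose_apply]
  rw [Finset.sum_comm]

lemma quad_factor {n m : ℕ} (Z : Matrix (Fin n) (Fin m) ℝ) (u : Fin n → H) :
    ∑ i, ⟪matVecH (Z * Z.transpose) u i, u i⟫_ℝ = ∑ k, ‖matVecH Z.transpose u k‖ ^ 2 := by
  rw [matVecH_mul', sum_inner_matVecH']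
  exact Finset.sum_congr rfl fun k _ => real_inner_self_eq_norm_sq _

lemma quad_skew {n : ℕ} (Q : Matrix (Fin n) (Fin n) ℝ) (hQ : Q.transpose = -Q)
    (u : Fin n → H) : ∑ i, ⟪matVecH Q u i, u i⟫_ℝ = 0 := by
  have h1 := sum_inner_matVecH' Q u u
  rw [hQ, matVecH_neg] at h1
  simp only [Pi.neg_apply, inner_neg_right] at h1
  have h2 : ∀ k, ⟪u k, matVecH Q u k⟫_ℝ = ⟪matVecH Q u k, u k⟫_ℝ := fun k => real_inner_comm _ _
  simp only [h2] at h1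
  simp only [Finset.sum_neg_distrib] at h1
  linarith

lemma lapE_symm {N : ℕ} (E : Finset (Fin N × Fin N)) : (lapE E).transpose = lapE E := by
  funext i j
  simp only [Matrix.transpose_apply, lapE]
  by_cases h : i = j
  · subst h; simp
  · rw [if_neg (Ne.symm h), if_neg h]
    exact if_congr or_comm rfl rfl

lemma sigmaE_skew {N : ℕ} (E : Finset (Fin N × Fin N)) :
    (sigmaE E).transpose = -(sigmaE E) := by
  funext i j
  have hsymm : lapE E j i = lapE E i j := by
    have := congrFun (congrFun (lapE_symm E) j) i
    simpa [Matrix.transpose_apply] using this.symm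
  simp only [Matrix.transpose_apply, sigmaE, Matrix.neg_apply]
  rcases lt_trichotomy i j with h | h | h
  · rw [if_neg (asymm h), if_pos h, if_pos h, hsymm, neg_neg]
  · subst h; simp
  · rw [if_pos h, if_neg (asymm h), if_pos h, hsymm]


lemma matVecH_pij {N : ℕ} (i j : Fin N) (hij : i ≠ j) (u : Fin N → H) :
    matVecH (pijM N i j) u =
      fun h => (if h = i then u i else 0) + (if h = j then u j - (2:ℝ) • u i else 0) := by
  funext h
  by_cases hi : h = i
  · rw [hi]
    have key : ∀ k : Fin N, (pijM N i j) i k • u k = if k = i then u i else 0 := by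
      intro k
      by_cases hk : k = i
      · rw [hk]; simp [pijM]
      · simp [pijM, hk, hij]
    rw [matVecH]
    simp only [key]
    rw [Finset.sum_ite_eq' Finset.univ i (fun _ => u i)]
    simp [hij]
  · by_cases hj : h = j
    · rw [hj]
      have key : ∀ k : Fin N, (pijM N i j) j k • u k =
          (if k = j then u j else 0) + (if k = i then (-(2:ℝ)) • u i else 0) := by
        intro k
        by_cases hk : k = j
        · rw [hk]; simp [pijM, Ne.symm hij, hij]
        · by_cases hk' : k = i
          · rw [hk']; simp [pijM, Ne.symm hij, hij]
          · simp [pijM, hk, hk', Ne.symm hij]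
      rw [matVecH]
      simp only [key]
      rw [Finset.sum_add_distrib, Finset.sum_ite_eq' Finset.univ j (fun _ => u j),
        Finset.sum_ite_eq' Finset.univ i (fun _ => (-(2:ℝ)) • u i)]
      simp [Ne.symm hij, sub_eq_add_neg, neg_smul]
    · have key : ∀ k : Fin N, (pijM N i j) h k • u k = 0 := by
        intro k; simp [pijM, hi, hj]
      simp [matVecH, key, hi, hj]

lemma quad_pij {N : ℕ} (i j : Fin N) (hij : i ≠ j) (u : Fin N → H) :
    ∑ h, ⟪matVecH (pijM N i j) u h, u h⟫_ℝ = ‖u i - u j‖ ^ 2 := by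
  rw [matVecH_pij i j hij]
  have : ∀ h : Fin N, ⟪(if h = i then u i else 0) + (if h = j then u j - (2:ℝ) • u i else 0), u h⟫_ℝ
      = (if h = i then ⟪u i, u i⟫_ℝ else 0) + (if h = j then ⟪u j - (2:ℝ) • u i, u j⟫_ℝ else 0) := by
    intro h
    rw [inner_add_left]
    congr 1 <;> [skip; skip] <;> split <;> simp_all
  simp only [this]
  rw [Finset.sum_add_distrib, Finset.sum_ite_eq' Finset.univ i, Finset.sum_ite_eq' Finset.univ j]
  simp only [Finset.mem_univ, if_true]
  rw [inner_sub_left, real_inner_smul_left, norm_sub_sq_real, real_inner_self_eq_norm_sq,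
    real_inner_self_eq_norm_sq, real_inner_comm (u j) (u i)]
  ring

lemma quad_pE_nonneg {N : ℕ} (E E' : Finset (Fin N × Fin N))
    (htopo : ∀ e ∈ E, e.1 < e.2) (u : Fin N → H) :
    0 ≤ ∑ h, ⟪matVecH (pE E E') u h, u h⟫_ℝ := by
  rw [pE, matVecH_finsum]
  have : ∀ h, ⟪(∑ e ∈ E \ E', matVecH (pijM N e.1 e.2) u) h, u h⟫_ℝ
      = ∑ e ∈ E \ E', ⟪matVecH (pijM N e.1 e.2) u h, u h⟫_ℝ := by
    intro h; rw [Finset.sum_apply, sum_inner]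
  simp only [this]
  rw [Finset.sum_comm]
  refine Finset.sum_nonneg fun e he => ?_
  have h12 : e.1 ≠ e.2 := ne_of_lt (htopo e (Finset.mem_sdiff.mp he).1)
  rw [quad_pij e.1 e.2 h12]
  positivity

end GDR


namespace GDR

open Matrix in
/-- The all-`1/N` matrix. -/
noncomputable def JN (N : ℕ) : Matrix (Fin N) (Fin N) ℝ := Matrix.of fun _ _ => (N : ℝ)⁻¹

open Matrix in
lemma exists_K {N : ℕ} (hN : 2 ≤ N) (E' : Finset (Fin N × Fin N))
    (Z : Matrix (Fin N) (Fin (N - 1)) ℝ) (hZ : ZOnto E' Z) :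
    ∃ K : Matrix (Fin N) (Fin (N - 1)) ℝ,
      K * Z.transpose = 1 - JN N ∧ Z * K.transpose = 1 - JN N := by
  have hNpos : 0 < N := lt_of_lt_of_le (by norm_num) hN
  have hN0 : (N:ℝ) ≠ 0 := by exact_mod_cast hNpos.ne'
  set L := lapE E' with hL
  set Lh := L + JN N with hLh
  have hZone : Z.transpose.mulVec (fun _ => (1:ℝ)) = 0 := (hZ.2 _).mpr ⟨1, rfl⟩
  have hLone : L.mulVec (fun _ => (1:ℝ)) = 0 := by
    rw [hL, ← hZ.1, ← Matrix.mulVec_mulVec, hZone, Matrix.mulVec_zero]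
  have hJone : (JN N).mulVec (fun _ => (1:ℝ)) = fun _ => (1:ℝ) := by
    funext i
    simp only [JN, Matrix.mulVec, dotProduct, Matrix.of_apply, mul_one,
      Finset.sum_const, Finset.card_univ, Fintype.card_fin, nsmul_eq_mul]
    field_simp
  have hLhone : Lh.mulVec (fun _ => (1:ℝ)) = fun _ => (1:ℝ) := by
    rw [hLh, Matrix.add_mulVec, hLone, hJone]
    funext i; simp
  have hker : ∀ v : Fin N → ℝ, Lh.mulVec v = 0 → v = 0 := by
    intro v hv
    have h0 : v ⬝ᵥ Lh.mulVec v = 0 := by rw [hv, dotProduct_zero]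
    have hsplit : v ⬝ᵥ Lh.mulVec v = v ⬝ᵥ L.mulVec v + v ⬝ᵥ (JN N).mulVec v := by
      rw [hLh, Matrix.add_mulVec, dotProduct_add]
    have hLq : v ⬝ᵥ L.mulVec v = ∑ k, (Z.transpose.mulVec v k) ^ 2 := by
      rw [hL, ← hZ.1, ← Matrix.mulVec_mulVec, Matrix.dotProduct_mulVec, ← Matrix.mulVec_transpose]
      simp [dotProduct, sq]
    have hJq : v ⬝ᵥ (JN N).mulVec v = (N:ℝ)⁻¹ * (∑ i, v i) ^ 2 := by
      have hcomp : ∀ i, (JN N).mulVec v i = (N:ℝ)⁻¹ * ∑ j, v j := by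
        intro i; simp [JN, Matrix.mulVec, dotProduct, Finset.mul_sum]
      simp only [dotProduct, hcomp]
      rw [← Finset.sum_mul]
      ring
    have h1 : (0:ℝ) ≤ ∑ k, (Z.transpose.mulVec v k)^2 := Finset.sum_nonneg fun k _ => sq_nonneg _
    have h2 : (0:ℝ) ≤ (N:ℝ)⁻¹ * (∑ i, v i)^2 := by positivity
    have hzero1 : ∑ k, (Z.transpose.mulVec v k)^2 = 0 := by
      rw [hsplit, hLq, hJq] at h0; linarith
    have hzero2 : (N:ℝ)⁻¹ * (∑ i, v i)^2 = 0 := by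
      rw [hsplit, hLq, hJq] at h0; linarith
    have hq0 : Z.transpose.mulVec v = 0 := by
      funext k
      have := (Finset.sum_eq_zero_iff_of_nonneg (fun k _ => sq_nonneg
        (Z.transpose.mulVec v k))).mp hzero1 k (Finset.mem_univ k)
      exact pow_eq_zero_iff (by norm_num) |>.mp this
    obtain ⟨c, hc⟩ := (hZ.2 v).mp hq0
    have hsum : ∑ i, v i = (N:ℝ) * c := by
      rw [hc]; simp [Finset.sum_const, Finset.card_univ, mul_comm]
    have hc0 : c = 0 := by
      rw [hsum] at hzero2
      have : ((N:ℝ) * c)^2 = 0 := by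
        field_simp at hzero2
        simpa using hzero2
      have := pow_eq_zero_iff (n := 2) (by norm_num) |>.mp this
      rcases mul_eq_zero.mp this with h | h
      · exact absurd h hN0
      · exact h
    rw [hc, hc0]
    rfl
  have hinj : Function.Injective Lh.mulVec := by
    intro v w hvw
    have h1 : Lh.mulVec (v - w) = 0 := by rw [Matrix.mulVec_sub, hvw, sub_self]
    exact sub_eq_zero.mp (hker _ h1)
  have hdet : IsUnit Lh.det :=
    (Matrix.isUnit_iff_isUnit_det _).mp (Matrix.mulVec_injective_iff_isUnit.mp hinj)
  have hinvmul : Lh⁻¹ * Lh = 1 := Matrix.nonsing_inv_mul _ hdet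
  have hLhJ : Lh * JN N = JN N := by
    ext i j
    have hrow : ∑ k, Lh i k = 1 := by
      have := congrFun hLhone i
      simpa [Matrix.mulVec, dotProduct] using this
    simp only [Matrix.mul_apply, JN, Matrix.of_apply]
    rw [← Finset.sum_mul, hrow, one_mul]
  have hinvJ : Lh⁻¹ * JN N = JN N := by
    conv_lhs => rw [← hLhJ, ← Matrix.mul_assoc, hinvmul, Matrix.one_mul]
  have hmain : (Lh⁻¹ * Z) * Z.transpose = 1 - JN N := by
    rw [Matrix.mul_assoc, hZ.1]
    have hLJ : lapE E' = Lh - JN N := by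
      rw [hLh, add_sub_cancel_right]
    rw [hLJ, Matrix.mul_sub, hinvmul, hinvJ]
  refine ⟨Lh⁻¹ * Z, hmain, ?_⟩
  have := congrArg Matrix.transpose hmain
  rw [Matrix.transpose_mul, Matrix.transpose_transpose, Matrix.transpose_sub,
    Matrix.transpose_one] at this
  have hJt : (JN N).transpose = JN N := by ext i j; simp [JN, Matrix.transpose_apply]
  rw [hJt] at this
  exact this

lemma k_mul_tendsto_zero (f : ℕ → ℝ) (h0 : ∀ k, 0 ≤ f k) (hmono : ∀ k, f (k + 1) ≤ f k)
    (hsum : Summable f) : Filter.Tendsto (fun k : ℕ => (k : ℝ) * f k) Filter.atTop (𝓝 0) := by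
  have hanti : Antitone f := antitone_nat_of_succ_le hmono
  rw [Metric.tendsto_atTop]
  intro ε hε
  have hT : Filter.Tendsto (fun m => ∑' j, f (j + m)) Filter.atTop (𝓝 0) :=
    tendsto_sum_nat_add f
  have hme : ∃ m, ∑' j, f (j + m) < ε / 4 :=
    (hT.eventually (gt_mem_nhds (by positivity : (0:ℝ) < ε/4))).exists
  obtain ⟨m, hm⟩ := hme
  refine ⟨2 * m + 1, fun k hk => ?_⟩
  have hsumIco : ((k - m : ℕ) : ℝ) * f k ≤ ∑' j, f (j + m) := by
    have h1 : ∀ j ∈ Finset.range (k - m), f k ≤ f (j + m) := by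
      intro j hj
      apply hanti
      have := Finset.mem_range.mp hj
      omega
    calc ((k - m : ℕ) : ℝ) * f k = ∑ _j ∈ Finset.range (k - m), f k := by
          rw [Finset.sum_const, Finset.card_range, nsmul_eq_mul]
      _ ≤ ∑ j ∈ Finset.range (k - m), f (j + m) := Finset.sum_le_sum h1
      _ ≤ ∑' j, f (j + m) :=
          Summable.sum_le_tsum _ (fun i _ => h0 _) ((summable_nat_add_iff m).mpr hsum)
  have hkm : (k : ℝ) ≤ 2 * ((k - m : ℕ) : ℝ) := by
    have h2 : k ≤ 2 * (k - m) := by omega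
    exact_mod_cast h2
  have hfk : 0 ≤ f k := h0 k
  have : (k : ℝ) * f k ≤ 2 * (ε / 4) := by
    calc (k : ℝ) * f k ≤ 2 * ((k - m : ℕ) : ℝ) * f k := by
          apply mul_le_mul_of_nonneg_right hkm hfk
      _ = 2 * (((k - m : ℕ) : ℝ) * f k) := by ring
      _ ≤ 2 * (∑' j, f (j + m)) := by linarith
      _ ≤ 2 * (ε / 4) := by linarith
  have hnn : 0 ≤ (k : ℝ) * f k := by positivity
  rw [Real.dist_eq, sub_zero, abs_of_nonneg hnn]
  linarith

section Hilb
variable {H : Type*} [NormedAddCommGroup H] [InnerProductSpace ℝ H]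

lemma sum_inner_le_sqrt {n : ℕ} (u v : Fin n → H) :
    ∑ i, ⟪u i, v i⟫_ℝ ≤ Real.sqrt (∑ i, ‖u i‖ ^ 2) * Real.sqrt (∑ i, ‖v i‖ ^ 2) := by
  have h1 : ∑ i, ⟪u i, v i⟫_ℝ ≤ ∑ i, ‖u i‖ * ‖v i‖ :=
    Finset.sum_le_sum fun i _ => real_inner_le_norm _ _
  have h2 := Finset.sum_mul_sq_le_sq_mul_sq Finset.univ (fun i => ‖u i‖) (fun i => ‖v i‖)
  have h3 : (0:ℝ) ≤ ∑ i, ‖u i‖ * ‖v i‖ :=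
    Finset.sum_nonneg fun i _ => mul_nonneg (norm_nonneg _) (norm_nonneg _)
  have h4 : ∑ i, ‖u i‖ * ‖v i‖ ≤ Real.sqrt ((∑ i, ‖u i‖ ^ 2) * ∑ i, ‖v i‖ ^ 2) := by
    rw [← Real.sqrt_sq h3]
    exact Real.sqrt_le_sqrt h2
  have h5 : Real.sqrt ((∑ i, ‖u i‖ ^ 2) * ∑ i, ‖v i‖ ^ 2)
      = Real.sqrt (∑ i, ‖u i‖ ^ 2) * Real.sqrt (∑ i, ‖v i‖ ^ 2) :=
    Real.sqrt_mul (Finset.sum_nonneg fun i _ => sq_nonneg _) _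
  linarith

lemma sum_norm_sub_smul_sq {n : ℕ} (u v : Fin n → H) (c : ℝ) :
    ∑ i, ‖u i - c • v i‖ ^ 2
      = ∑ i, ‖u i‖ ^ 2 - 2 * c * (∑ i, ⟪u i, v i⟫_ℝ) + c ^ 2 * ∑ i, ‖v i‖ ^ 2 := by
  have h : ∀ i, ‖u i - c • v i‖ ^ 2
      = ‖u i‖ ^ 2 - 2 * c * ⟪u i, v i⟫_ℝ + c ^ 2 * ‖v i‖ ^ 2 := by
    intro i
    rw [norm_sub_sq_real, real_inner_smul_right, norm_smul, mul_pow]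
    simp [Real.norm_eq_abs, sq_abs]
    ring
  rw [Finset.sum_congr rfl fun i _ => h i, Finset.sum_add_distrib, Finset.sum_sub_distrib,
    ← Finset.mul_sum, ← Finset.mul_sum]

lemma sum_norm_sub_sq_expand {n : ℕ} (u v : Fin n → H) :
    ∑ i, ‖u i - v i‖ ^ 2
      = ∑ i, ‖u i‖ ^ 2 - 2 * (∑ i, ⟪u i, v i⟫_ℝ) + ∑ i, ‖v i‖ ^ 2 := by
  have := sum_norm_sub_smul_sq u v 1
  simpa using this

end Hilb

end GDR

namespace GDR
section Hilb2
variable {H : Type*} [NormedAddCommGroup H] [InnerProductSpace ℝ H]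

lemma sum_matVecH {n m : ℕ} (Q : Matrix (Fin n) (Fin m) ℝ) (u : Fin m → H) :
    ∑ i, matVecH Q u i = ∑ j, (∑ i, Q i j) • u j := by
  simp only [matVecH]
  rw [Finset.sum_comm]
  exact Finset.sum_congr rfl fun j _ => by rw [Finset.sum_smul]

end Hilb2

lemma total_skew {n : ℕ} (Q : Matrix (Fin n) (Fin n) ℝ) (hQ : Q.transpose = -Q) :
    ∑ j, ∑ i, Q i j = 0 := by
  have h2 : ∀ i j : Fin n, Q j i = -Q i j := by
    intro i j
    have := congrFun (congrFun hQ i) j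
    simpa [Matrix.transpose_apply, Matrix.neg_apply] using this
  have h3 : ∑ i, ∑ j, Q i j = -∑ i, ∑ j, Q i j := by
    calc ∑ i, ∑ j, Q i j = ∑ i, ∑ j, -Q j i :=
          Finset.sum_congr rfl fun i _ => Finset.sum_congr rfl fun j _ => h2 j i
      _ = -∑ i, ∑ j, Q j i := by simp [Finset.sum_neg_distrib]
      _ = -∑ j, ∑ i, Q j i := by rw [Finset.sum_comm]
  have h4 : ∑ i, ∑ j, Q i j = 0 := by linarith
  rw [Finset.sum_comm]
  exact h4

lemma total_pij {N : ℕ} (i j : Fin N) (hij : i ≠ j) :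
    ∑ h, ∑ k, pijM N i j h k = 0 := by
  have h1 := matVecH_pij (H := ℝ) i j hij (fun _ => (1:ℝ))
  have h2 : ∀ h, matVecH (pijM N i j) (fun _ => (1:ℝ)) h = ∑ k, pijM N i j h k := by
    intro h; simp [matVecH]
  have h3 : ∑ h, matVecH (pijM N i j) (fun _ => (1:ℝ)) h
      = ∑ h, ((if h = i then (1:ℝ) else 0) + (if h = j then (1:ℝ) - (2:ℝ) • (1:ℝ) else 0)) := by
    rw [h1]
  rw [Finset.sum_congr rfl fun h _ => (h2 h).symm, h3, Finset.sum_add_distrib,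
    Finset.sum_ite_eq' Finset.univ i, Finset.sum_ite_eq' Finset.univ j]
  norm_num

end GDR

namespace GDR
lemma contraction_scalar (Qs1 Qs0 IP th eps : ℝ)
    (h : Qs1 - 2 * IP + Qs0 ≤ -th * (IP - Qs0))
    (hCS : IP ≤ Real.sqrt Qs1 * Real.sqrt Qs0)
    (h1 : 0 ≤ Qs1) (h0 : 0 ≤ Qs0)
    (hθ1 : eps ≤ th) (hθ2 : th ≤ 2 - eps) (heps : 0 < eps) : Qs1 ≤ Qs0 := by
  set S := Real.sqrt Qs1 with hS
  set T := Real.sqrt Qs0 with hT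
  have hSsq : S ^ 2 = Qs1 := Real.sq_sqrt h1
  have hTsq : T ^ 2 = Qs0 := Real.sq_sqrt h0
  have hSnn : 0 ≤ S := Real.sqrt_nonneg _
  have hTnn : 0 ≤ T := Real.sqrt_nonneg _
  have h2 : S ^ 2 + (1 - th) * T ^ 2 ≤ (2 - th) * (S * T) := by
    have hIP2 : (2 - th) * IP ≤ (2 - th) * (S * T) :=
      mul_le_mul_of_nonneg_left hCS (by linarith)
    nlinarith [h, hIP2, hSsq, hTsq]
  have hST : S ≤ T := by
    by_contra hcon
    push_neg at hcon
    have hc1 : 0 < S - T := sub_pos.mpr hcon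
    nlinarith [h2, mul_pos hc1 hc1,
      mul_nonneg (mul_nonneg (by linarith : (0:ℝ) ≤ th) hTnn) hc1.le]
  calc Qs1 = S ^ 2 := hSsq.symm
    _ ≤ T ^ 2 := by nlinarith [hST, hSnn]
    _ = Qs0 := hTsq
end GDR

set_option maxHeartbeats 2000000 in
/-- With relaxation parameters `θ_k ∈ [ε, 2 − ε]`, the graph-based
Douglas–Rachford iteration satisfies `Var(x^k) = o(k^{−1})` and `‖∑_i a_i^k‖² = o(k^{−1})`;
in particular `∑_i a_i^k` converges strongly to `0`. -/
theorem graphDRS_variance_rate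
    {H : Type*} [NormedAddCommGroup H] [InnerProductSpace ℝ H] [CompleteSpace H]
    (N : ℕ) (hN : 2 ≤ N) (E E' : Finset (Fin N × Fin N)) (hbi : IsBilevel E E')
    (Z : Matrix (Fin N) (Fin (N - 1)) ℝ) (hZ : ZOnto E' Z)
    (A : Fin N → H → Set H) (hA : ∀ i, IsMaxMonotone (A i))
    (hzer : SumZerNonempty A)
    (σ : ℝ) (hσ : 0 < σ)
    (ε : ℝ) (hε0 : 0 < ε) (hε1 : ε < 1)
    (θ : ℕ → ℝ) (hθ : ∀ k, θ k ∈ Set.Icc ε (2 - ε))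
    (x a : ℕ → Fin N → H) (w : ℕ → Fin (N - 1) → H)
    (hiter : IsGDR E E' Z A σ θ x a w) :
    Tendsto (fun k : ℕ => (k : ℝ) * stateVar (x k)) atTop (𝓝 0) ∧
    Tendsto (fun k : ℕ => (k : ℝ) * ‖∑ i, a k i‖ ^ 2) atTop (𝓝 0) ∧
    Tendsto (fun k : ℕ => ∑ i, a k i) atTop (𝓝 (0 : H)) := by

  classical
  obtain ⟨xs, b, hbmem, hbsum⟩ := hzer
  obtain ⟨K, hKZ, hZK⟩ := GDR.exists_K hN E' Z hZ
  set M : Matrix (Fin N) (Fin N) ℝ := lapE E' + sigmaE E' + pE E E' with hM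
  have hres : ∀ k, matVecH M (x (k + 1)) + σ • a (k + 1) = matVecH Z (w k) := by
    intro k; rw [hM]; exact hiter.res k
  have hNpos : 0 < N := lt_of_lt_of_le (by norm_num) hN
  have hN0 : (N : ℝ) ≠ 0 := by exact_mod_cast hNpos.ne'
  -- column sums of Z vanish
  have hZt1 : Z.transpose.mulVec (fun _ => (1:ℝ)) = 0 := (hZ.2 _).mpr ⟨1, rfl⟩
  have hZcol : ∀ t, ∑ i, Z i t = 0 := by
    intro t
    have := congrFun hZt1 t
    simpa [Matrix.mulVec, dotProduct, Matrix.transpose_apply] using this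
  have hsumZ : ∀ v : Fin (N - 1) → H, ∑ i, matVecH Z v i = 0 := by
    intro v
    rw [GDR.sum_matVecH]
    refine Finset.sum_eq_zero fun t _ => ?_
    rw [hZcol t, zero_smul]
  -- the quadratic form bound
  have hquadM : ∀ u : Fin N → H,
      ∑ t, ‖matVecH Z.transpose u t‖ ^ 2 ≤ ∑ i, ⟪matVecH M u i, u i⟫_ℝ := by
    intro u
    have hsplit : ∑ i, ⟪matVecH M u i, u i⟫_ℝ
        = ∑ i, ⟪matVecH (lapE E') u i, u i⟫_ℝ + ∑ i, ⟪matVecH (sigmaE E') u i, u i⟫_ℝ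
          + ∑ i, ⟪matVecH (pE E E') u i, u i⟫_ℝ := by
      rw [hM, GDR.matVecH_add, GDR.matVecH_add]
      simp only [Pi.add_apply, inner_add_left, Finset.sum_add_distrib]
    have h1 : ∑ i, ⟪matVecH (lapE E') u i, u i⟫_ℝ = ∑ t, ‖matVecH Z.transpose u t‖ ^ 2 := by
      rw [← hZ.1]; exact GDR.quad_factor Z u
    have h2 := GDR.quad_skew (sigmaE E') (GDR.sigmaE_skew E') u
    have h3 := GDR.quad_pE_nonneg E E' hbi.topo u
    rw [hsplit, h1, h2]
    linarith
  -- star point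
  set xst : Fin N → H := fun _ => xs with hxst
  have hqst : matVecH Z.transpose xst = 0 := by
    funext t
    have : matVecH Z.transpose xst t = (∑ i, Z i t) • xs := by
      simp only [matVecH, Matrix.transpose_apply]
      rw [Finset.sum_smul]
    rw [this, hZcol t, zero_smul]
    rfl
  -- total sum of entries of M is zero
  have hLone : (lapE E').mulVec (fun _ => (1:ℝ)) = 0 := by
    rw [← hZ.1, ← Matrix.mulVec_mulVec, hZt1, Matrix.mulVec_zero]
  have htotL : ∑ j, ∑ i, lapE E' i j = 0 := by
    rw [Finset.sum_comm]
    refine Finset.sum_eq_zero fun i _ => ?_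
    have := congrFun hLone i
    simpa [Matrix.mulVec, dotProduct] using this
  have htotP : ∑ j, ∑ i, pE E E' i j = 0 := by
    have : ∀ j, ∑ i, pE E E' i j = ∑ e ∈ E \ E', ∑ i, pijM N e.1 e.2 i j := by
      intro j
      simp only [pE, Matrix.sum_apply]
      exact Finset.sum_comm
    rw [Finset.sum_congr rfl fun j _ => this j, Finset.sum_comm]
    refine Finset.sum_eq_zero fun e he => ?_
    have h12 : e.1 ≠ e.2 := ne_of_lt (hbi.topo e (Finset.mem_sdiff.mp he).1)
    rw [Finset.sum_comm]
    exact GDR.total_pij e.1 e.2 h12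
  have htotM : ∑ j, ∑ i, M i j = 0 := by
    have : ∀ j, ∑ i, M i j
        = ∑ i, lapE E' i j + ∑ i, sigmaE E' i j + ∑ i, pE E E' i j := by
      intro j
      rw [hM]
      simp [Matrix.add_apply, Finset.sum_add_distrib]
    rw [Finset.sum_congr rfl fun j _ => this j]
    simp only [Finset.sum_add_distrib]
    rw [htotL, htotP, GDR.total_skew (sigmaE E') (GDR.sigmaE_skew E')]
    ring
  -- the vector v0 and w*
  set v0 : Fin N → H := matVecH M xst + σ • b with hv0
  have hv0sum : ∑ i, v0 i = 0 := by
    rw [hv0]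
    simp only [Pi.add_apply, Pi.smul_apply, Finset.sum_add_distrib]
    rw [GDR.sum_matVecH, ← Finset.smul_sum, hbsum, smul_zero, add_zero]
    have : ∀ j, (∑ i, M i j) • xst j = (∑ i, M i j) • xs := fun j => rfl
    rw [Finset.sum_congr rfl fun j _ => this j, ← Finset.sum_smul, htotM, zero_smul]
  set wst : Fin (N - 1) → H := matVecH K.transpose v0 with hwst
  have hJv0 : matVecH (GDR.JN N) v0 = 0 := by
    funext i
    have : matVecH (GDR.JN N) v0 i = (N:ℝ)⁻¹ • ∑ j, v0 j := by
      simp only [matVecH, GDR.JN, Matrix.of_apply]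
      rw [Finset.smul_sum]
    rw [this, hv0sum, smul_zero]
    rfl
  have hstar : matVecH M xst + σ • b = matVecH Z wst := by
    rw [hwst, ← GDR.matVecH_mul, hZK, GDR.matVecH_matsub, GDR.matVecH_one, hJv0, sub_zero, hv0]
  -- KEY monotone inequality
  have key : ∀ (w₁ w₂ : Fin (N - 1) → H) (x₁ x₂ a₁ a₂ : Fin N → H),
      (∀ i, a₁ i ∈ A i (x₁ i)) → (∀ i, a₂ i ∈ A i (x₂ i)) →
      matVecH M x₁ + σ • a₁ = matVecH Z w₁ → matVecH M x₂ + σ • a₂ = matVecH Z w₂ →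
      ∑ t, ‖matVecH Z.transpose (x₁ - x₂) t‖ ^ 2
        ≤ ∑ t, ⟪matVecH Z.transpose (x₁ - x₂) t, w₁ t - w₂ t⟫_ℝ := by
    intro w₁ w₂ x₁ x₂ a₁ a₂ h₁ h₂ e₁ e₂
    have he : matVecH M (x₁ - x₂) + σ • (a₁ - a₂) = matVecH Z (w₁ - w₂) := by
      rw [GDR.matVecH_sub, GDR.matVecH_sub, smul_sub, ← e₁, ← e₂]
      abel
    have hmono' : 0 ≤ ∑ i, ⟪a₁ i - a₂ i, (x₁ - x₂) i⟫_ℝ :=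
      Finset.sum_nonneg fun i _ =>
        (hA i).1 (x₁ i) (x₂ i) (a₁ i) (a₂ i) (h₁ i) (h₂ i)
    have hinner : ∑ i, ⟪matVecH M (x₁ - x₂) i, (x₁ - x₂) i⟫_ℝ
          + σ * ∑ i, ⟪a₁ i - a₂ i, (x₁ - x₂) i⟫_ℝ
        = ∑ t, ⟪matVecH Z.transpose (x₁ - x₂) t, w₁ t - w₂ t⟫_ℝ := by
      have hL : ∑ i, ⟪(matVecH M (x₁ - x₂) + σ • (a₁ - a₂)) i, (x₁ - x₂) i⟫_ℝ
          = ∑ i, ⟪matVecH M (x₁ - x₂) i, (x₁ - x₂) i⟫_ℝ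
            + σ * ∑ i, ⟪a₁ i - a₂ i, (x₁ - x₂) i⟫_ℝ := by
        simp only [Pi.add_apply, Pi.smul_apply, inner_add_left, real_inner_smul_left,
          Pi.sub_apply]
        rw [Finset.sum_add_distrib, Finset.mul_sum]
      have hR : ∑ i, ⟪matVecH Z (w₁ - w₂) i, (x₁ - x₂) i⟫_ℝ
          = ∑ t, ⟪matVecH Z.transpose (x₁ - x₂) t, w₁ t - w₂ t⟫_ℝ := by
        rw [GDR.sum_inner_matVecH]
        exact Finset.sum_congr rfl fun t _ => by
          rw [real_inner_comm]
          rfl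
      rw [← hL, he, hR]
    have hq := hquadM (x₁ - x₂)
    have hσm : 0 ≤ σ * ∑ i, ⟪a₁ i - a₂ i, (x₁ - x₂) i⟫_ℝ := mul_nonneg hσ.le hmono'
    linarith
  -- abbreviations
  set q : ℕ → Fin (N - 1) → H := fun k => matVecH Z.transpose (x (k + 1)) with hqdef
  set Qs : ℕ → ℝ := fun k => ∑ t, ‖q k t‖ ^ 2 with hQsdef
  have hQsnn : ∀ k, 0 ≤ Qs k := fun k => Finset.sum_nonneg fun t _ => sq_nonneg _
  -- key applied against the star point
  have key_star : ∀ k, Qs k ≤ ∑ t, ⟪q k t, w k t - wst t⟫_ℝ := by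
    intro k
    have h := key (w k) wst (x (k + 1)) xst (a (k + 1)) b (hiter.mem k) hbmem (hres k) hstar
    have hx : matVecH Z.transpose (x (k + 1) - xst) = q k := by
      rw [GDR.matVecH_sub, hqst, sub_zero, hqdef]
    rw [hx] at h
    exact h
  -- key applied to consecutive steps
  have key_step : ∀ k, ∑ t, ‖q (k + 1) t - q k t‖ ^ 2
      ≤ -(θ k) * ∑ t, ⟪q (k + 1) t - q k t, q k t⟫_ℝ := by
    intro k
    have h := key (w (k + 1)) (w k) (x (k + 2)) (x (k + 1)) (a (k + 2)) (a (k + 1))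
      (hiter.mem (k + 1)) (hiter.mem k) (hres (k + 1)) (hres k)
    have hx : matVecH Z.transpose (x (k + 2) - x (k + 1)) = q (k + 1) - q k := by
      rw [GDR.matVecH_sub, hqdef]
    rw [hx] at h
    have hw : ∀ t, w (k + 1) t - w k t = -(θ k • q k t) := by
      intro t
      rw [hiter.upd k]
      simp [Pi.sub_apply, Pi.smul_apply, hqdef]
    have hrw : ∑ t, ⟪(q (k + 1) - q k) t, w (k + 1) t - w k t⟫_ℝ
        = -(θ k) * ∑ t, ⟪q (k + 1) t - q k t, q k t⟫_ℝ := by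
      rw [Finset.mul_sum]
      refine Finset.sum_congr rfl fun t _ => ?_
      rw [hw t, inner_neg_right, real_inner_smul_right, Pi.sub_apply]
      ring
    rw [hrw] at h
    have hpt : ∀ t, ‖(q (k + 1) - q k) t‖ ^ 2 = ‖q (k + 1) t - q k t‖ ^ 2 := fun t => rfl
    rw [Finset.sum_congr rfl fun t _ => hpt t] at h
    exact h
  -- Fejér monotonicity
  have hfej : ∀ k, ∑ t, ‖(w (k + 1) - wst) t‖ ^ 2
      ≤ ∑ t, ‖(w k - wst) t‖ ^ 2 - ε ^ 2 * Qs k := by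
    intro k
    have hup : ∀ t, (w (k + 1) - wst) t = (w k - wst) t - θ k • q k t := by
      intro t
      rw [hiter.upd k]
      simp only [Pi.sub_apply, Pi.smul_apply, hqdef]
      abel
    rw [Finset.sum_congr rfl fun t _ => by rw [hup t], GDR.sum_norm_sub_smul_sq]
    have hks := key_star k
    have hcomm : ∑ t, ⟪(w k - wst) t, q k t⟫_ℝ = ∑ t, ⟪q k t, w k t - wst t⟫_ℝ :=
      Finset.sum_congr rfl fun t _ => by rw [real_inner_comm]; rfl
    have hθk := hθ k
    have hθ1 : ε ≤ θ k := hθk.1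
    have hθ2 : θ k ≤ 2 - ε := hθk.2
    have hQnn := hQsnn k
    have hS : Qs k ≤ ∑ t, ⟪(w k - wst) t, q k t⟫_ℝ := by rw [hcomm]; exact hks
    have hQs_eq : ∑ t, ‖q k t‖ ^ 2 = Qs k := rfl
    rw [hQs_eq]
    have hA1 : 0 ≤ (θ k - ε) * (2 - ε - θ k) :=
      mul_nonneg (sub_nonneg.mpr hθ1) (sub_nonneg.mpr (by linarith))
    have hA2 : 0 ≤ Qs k * ((θ k - ε) * (2 - ε - θ k)) := mul_nonneg hQnn hA1
    have hA3 : 0 ≤ ε * Qs k * (1 - ε) :=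
      mul_nonneg (mul_nonneg hε0.le hQnn) (by linarith)
    have hA4 : θ k * Qs k ≤ θ k * ∑ t, ⟪(w k - wst) t, q k t⟫_ℝ :=
      mul_le_mul_of_nonneg_left hS (by linarith)
    nlinarith [hA2, hA3, hA4]
  -- summability of Qs
  have hsum_bound : ∀ n : ℕ, ε ^ 2 * ∑ k ∈ Finset.range n, Qs k
      + ∑ t, ‖(w n - wst) t‖ ^ 2 ≤ ∑ t, ‖(w 0 - wst) t‖ ^ 2 := by
    intro n
    induction n with
    | zero => simp
    | succ m ih =>
      have h1 := hfej m
      rw [Finset.sum_range_succ, mul_add]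
      linarith
  have hQsum : Summable Qs := by
    apply summable_of_sum_range_le hQsnn (c := (∑ t, ‖(w 0 - wst) t‖ ^ 2) / ε ^ 2)
    intro n
    have h1 := hsum_bound n
    have h2 : 0 ≤ ∑ t, ‖(w n - wst) t‖ ^ 2 := Finset.sum_nonneg fun t _ => sq_nonneg _
    rw [le_div_iff₀ (by positivity)]
    linarith
  -- monotonicity of Qs
  have hQmono : ∀ k, Qs (k + 1) ≤ Qs k := by
    intro k
    have h := key_step k
    have hθk := hθ k
    have hexp : ∑ t, ‖q (k + 1) t - q k t‖ ^ 2
        = Qs (k + 1) - 2 * ∑ t, ⟪q (k + 1) t, q k t⟫_ℝ + Qs k := by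
      rw [GDR.sum_norm_sub_sq_expand]
    have hip : ∑ t, ⟪q (k + 1) t - q k t, q k t⟫_ℝ
        = ∑ t, ⟪q (k + 1) t, q k t⟫_ℝ - Qs k := by
      simp only [inner_sub_left, real_inner_self_eq_norm_sq]
      rw [Finset.sum_sub_distrib]
    rw [hexp, hip] at h
    exact GDR.contraction_scalar _ _ _ _ ε h (GDR.sum_inner_le_sqrt _ _)
      (hQsnn _) (hQsnn _) hθk.1 hθk.2 hε0
  have hkQ : Tendsto (fun k : ℕ => (k : ℝ) * Qs k) atTop (𝓝 0) :=
    GDR.k_mul_tendsto_zero Qs hQsnn hQmono hQsum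
  have hQ0 : Tendsto Qs atTop (𝓝 0) := hQsum.tendsto_atTop_zero
  -- the generic transfer principle
  have transfer : ∀ (g : ℕ → ℝ) (C : ℝ), 0 ≤ C → (∀ k, 0 ≤ g k) →
      (∀ k, g (k + 1) ≤ C * Qs k) →
      Tendsto (fun k : ℕ => (k : ℝ) * g k) atTop (𝓝 0) := by
    intro g C hC hg hgle
    have hbase : Tendsto (fun j : ℕ => C * (((j : ℝ) + 1) * Qs j)) atTop (𝓝 0) := by
      have h1 : Tendsto (fun j : ℕ => (j : ℝ) * Qs j + Qs j) atTop (𝓝 0) := by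
        simpa using hkQ.add hQ0
      have h2 : (fun j : ℕ => ((j : ℝ) + 1) * Qs j) = fun j : ℕ => (j : ℝ) * Qs j + Qs j := by
        funext j; ring
      have h3 : Tendsto (fun j : ℕ => ((j : ℝ) + 1) * Qs j) atTop (𝓝 0) := by
        rw [h2]; exact h1
      simpa using h3.const_mul C
    have hcomp : Tendsto (fun k : ℕ => C * ((((k - 1 : ℕ) : ℝ) + 1) * Qs (k - 1)))
        atTop (𝓝 0) := by
      exact hbase.comp (tendsto_sub_atTop_nat 1)
    apply squeeze_zero'
      (Filter.Eventually.of_forall fun k => mul_nonneg (Nat.cast_nonneg k) (hg k)) ?_ hcomp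
    refine Filter.eventually_atTop.mpr ⟨1, fun k hk => ?_⟩
    obtain ⟨j, rfl⟩ : ∃ j, k = j + 1 := ⟨k - 1, (Nat.succ_pred_eq_of_pos hk).symm⟩
    simp only [Nat.add_sub_cancel]
    have hle := hgle j
    have hcast : ((j + 1 : ℕ) : ℝ) = (j : ℝ) + 1 := by push_cast; ring
    calc ((j + 1 : ℕ) : ℝ) * g (j + 1) ≤ ((j + 1 : ℕ) : ℝ) * (C * Qs j) :=
          mul_le_mul_of_nonneg_left hle (Nat.cast_nonneg _)
      _ = C * (((j : ℝ) + 1) * Qs j) := by rw [hcast]; ring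
  -- variance bound
  have hvar : ∀ k, stateVar (x (k + 1)) ≤ ((N : ℝ)⁻¹ * ∑ i, ∑ t, (K i t) ^ 2) * Qs k := by
    intro k
    have h1 : matVecH (K * Z.transpose) (x (k + 1)) = matVecH K (q k) := by
      rw [GDR.matVecH_mul]
    rw [hKZ] at h1
    have h2 : matVecH (1 - GDR.JN N) (x (k + 1))
        = fun i => x (k + 1) i - (N : ℝ)⁻¹ • ∑ j, x (k + 1) j := by
      rw [GDR.matVecH_matsub, GDR.matVecH_one]
      funext i
      simp only [Pi.sub_apply]
      congr 1
      simp only [matVecH, GDR.JN, Matrix.of_apply]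
      rw [Finset.smul_sum]
    rw [h2] at h1
    have hdev : ∀ i, x (k + 1) i - (N : ℝ)⁻¹ • ∑ j, x (k + 1) j = ∑ t, K i t • q k t :=
      fun i => congrFun h1 i
    have hterm : ∀ i, ‖x (k + 1) i - (N : ℝ)⁻¹ • ∑ j, x (k + 1) j‖ ^ 2
        ≤ (∑ t, (K i t) ^ 2) * Qs k := by
      intro i
      rw [hdev i]
      have hb1 : ‖∑ t, K i t • q k t‖ ≤ ∑ t, |K i t| * ‖q k t‖ := by
        refine (norm_sum_le _ _).trans_eq ?_
        exact Finset.sum_congr rfl fun t _ => by rw [norm_smul, Real.norm_eq_abs]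
      have hb2 := Finset.sum_mul_sq_le_sq_mul_sq Finset.univ
        (fun t => |K i t|) (fun t => ‖q k t‖)
      have hb3 : ‖∑ t, K i t • q k t‖ ^ 2 ≤ (∑ t, |K i t| * ‖q k t‖) ^ 2 :=
        pow_le_pow_left₀ (norm_nonneg _) hb1 2
      have hb4 : ∑ t, |K i t| ^ 2 = ∑ t, (K i t) ^ 2 :=
        Finset.sum_congr rfl fun t _ => sq_abs _
      calc ‖∑ t, K i t • q k t‖ ^ 2 ≤ (∑ t, |K i t| ^ 2) * ∑ t, ‖q k t‖ ^ 2 := hb3.trans hb2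
        _ = (∑ t, (K i t) ^ 2) * Qs k := by rw [hb4]
    rw [stateVar]
    calc (N : ℝ)⁻¹ * ∑ i, ‖x (k + 1) i - (N : ℝ)⁻¹ • ∑ j, x (k + 1) j‖ ^ 2
        ≤ (N : ℝ)⁻¹ * ∑ i, (∑ t, (K i t) ^ 2) * Qs k :=
          mul_le_mul_of_nonneg_left (Finset.sum_le_sum fun i _ => hterm i) (by positivity)
      _ = ((N : ℝ)⁻¹ * ∑ i, ∑ t, (K i t) ^ 2) * Qs k := by
          rw [← Finset.sum_mul]; ring
  -- sum of operator values bound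
  have habound : ∀ k, ‖∑ i, a (k + 1) i‖ ^ 2
      ≤ ((σ ^ 2)⁻¹ * ∑ t, (K.transpose.mulVec (fun j => ∑ i, M i j) t) ^ 2) * Qs k := by
    intro k
    set c : Fin N → ℝ := fun j => ∑ i, M i j with hc
    set d : Fin (N - 1) → ℝ := K.transpose.mulVec c with hd
    have hcsum : ∑ j, c j = 0 := htotM
    have hcd : Z.mulVec d = c := by
      rw [hd, Matrix.mulVec_mulVec, hZK, Matrix.sub_mulVec, Matrix.one_mulVec]
      have hJc : (GDR.JN N).mulVec c = 0 := by
        funext i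
        simp only [GDR.JN, Matrix.mulVec, dotProduct, Matrix.of_apply]
        rw [← Finset.mul_sum, hcsum, mul_zero]
        rfl
      rw [hJc, sub_zero]
    have h0 := congrArg (fun v : Fin N → H => ∑ i, v i) (hres k)
    simp only [Pi.add_apply, Pi.smul_apply, Finset.sum_add_distrib] at h0
    rw [← Finset.smul_sum, hsumZ (w k), GDR.sum_matVecH] at h0
    have hdq : ∑ j, (∑ i, M i j) • x (k + 1) j = ∑ t, d t • q k t := by
      have hstep : ∀ j, (∑ i, M i j) • x (k + 1) j = ∑ t, (d t * Z j t) • x (k + 1) j := by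
        intro j
        have : (∑ i, M i j) = c j := rfl
        rw [this, ← hcd]
        simp only [Matrix.mulVec, dotProduct]
        rw [Finset.sum_smul]
        exact Finset.sum_congr rfl fun t _ => by rw [mul_comm]
      rw [Finset.sum_congr rfl fun j _ => hstep j, Finset.sum_comm]
      refine Finset.sum_congr rfl fun t _ => ?_
      simp only [hqdef, matVecH, Matrix.transpose_apply, Finset.smul_sum, smul_smul]
    rw [hdq] at h0
    have heq : σ • ∑ i, a (k + 1) i = -∑ t, d t • q k t :=
      eq_neg_of_add_eq_zero_right (by rw [add_comm] at h0; rw [add_comm]; exact h0)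
    have hnorm : σ * ‖∑ i, a (k + 1) i‖ = ‖∑ t, d t • q k t‖ := by
      have := congrArg norm heq
      rwa [norm_smul, Real.norm_eq_abs, abs_of_pos hσ, norm_neg] at this
    have hb1 : ‖∑ t, d t • q k t‖ ≤ ∑ t, |d t| * ‖q k t‖ := by
      refine (norm_sum_le _ _).trans_eq ?_
      exact Finset.sum_congr rfl fun t _ => by rw [norm_smul, Real.norm_eq_abs]
    have hb2 := Finset.sum_mul_sq_le_sq_mul_sq Finset.univ (fun t => |d t|) (fun t => ‖q k t‖)
    have hb4 : ∑ t, |d t| ^ 2 = ∑ t, (d t) ^ 2 := Finset.sum_congr rfl fun t _ => sq_abs _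
    have hσ2 : σ ^ 2 * ‖∑ i, a (k + 1) i‖ ^ 2 ≤ (∑ t, (d t) ^ 2) * Qs k := by
      have e1 : σ ^ 2 * ‖∑ i, a (k + 1) i‖ ^ 2 = (σ * ‖∑ i, a (k + 1) i‖) ^ 2 := by ring
      rw [e1, hnorm]
      calc ‖∑ t, d t • q k t‖ ^ 2 ≤ (∑ t, |d t| * ‖q k t‖) ^ 2 :=
            pow_le_pow_left₀ (norm_nonneg _) hb1 2
        _ ≤ (∑ t, |d t| ^ 2) * ∑ t, ‖q k t‖ ^ 2 := hb2
        _ = (∑ t, (d t) ^ 2) * Qs k := by rw [hb4]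
    have e2 : ‖∑ i, a (k + 1) i‖ ^ 2 = (σ ^ 2)⁻¹ * (σ ^ 2 * ‖∑ i, a (k + 1) i‖ ^ 2) := by
      field_simp
    rw [e2]
    calc (σ ^ 2)⁻¹ * (σ ^ 2 * ‖∑ i, a (k + 1) i‖ ^ 2)
        ≤ (σ ^ 2)⁻¹ * ((∑ t, (d t) ^ 2) * Qs k) :=
          mul_le_mul_of_nonneg_left hσ2 (by positivity)
      _ = ((σ ^ 2)⁻¹ * ∑ t, (d t) ^ 2) * Qs k := by ring
  have hvar0 : ∀ k, 0 ≤ stateVar (x k) := by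
    intro k
    exact mul_nonneg (by positivity) (Finset.sum_nonneg fun i _ => sq_nonneg _)
  refine ⟨?_, ?_, ?_⟩
  · exact transfer (fun k => stateVar (x k)) _ (by positivity) hvar0 hvar
  · exact transfer (fun k => ‖∑ i, a k i‖ ^ 2) _ (by positivity) (fun k => sq_nonneg _) habound
  · have h2 : Tendsto (fun k : ℕ => (k : ℝ) * ‖∑ i, a k i‖ ^ 2) atTop (𝓝 0) :=
      transfer (fun k => ‖∑ i, a k i‖ ^ 2) _ (by positivity) (fun k => sq_nonneg _) habound
    have hnorm2 : Tendsto (fun k : ℕ => ‖∑ i, a k i‖ ^ 2) atTop (𝓝 0) := by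
      apply squeeze_zero' (Filter.Eventually.of_forall fun k => sq_nonneg _)
        (g := fun k : ℕ => (k : ℝ) * ‖∑ i, a k i‖ ^ 2) ?_ h2
      refine Filter.eventually_atTop.mpr ⟨1, fun k hk => ?_⟩
      have h1k : (1 : ℝ) ≤ (k : ℝ) := by exact_mod_cast hk
      show ‖∑ i, a k i‖ ^ 2 ≤ (k : ℝ) * ‖∑ i, a k i‖ ^ 2
      nlinarith [sq_nonneg ‖∑ i, a k i‖]
    have hnorm : Tendsto (fun k : ℕ => ‖∑ i, a k i‖) atTop (𝓝 0) := by
      have hs := (Real.continuous_sqrt.tendsto 0).comp hnorm2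
      simp only [Real.sqrt_zero] at hs
      have : (fun k : ℕ => Real.sqrt (‖∑ i, a k i‖ ^ 2)) = fun k : ℕ => ‖∑ i, a k i‖ := by
        funext k
        exact Real.sqrt_sq (norm_nonneg _)
      rw [← this]
      exact hs
    exact tendsto_zero_iff_norm_tendsto_zero.mpr hnorm
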